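/- Let (Φ_n) be a Markov chain on (X,B(X)) satisfying the minorization condition P(x,A) ≥ 2δ·1_C(x)·ν(A) for all x and A, with 0 < δ < 1/2, ν(C) = 1. Define the split chain on X̌ = X × {0,1} with transition kernel P̌(x̌,·) = Q(x̌,·)*, where Q(x̌,·) = P(x,·) if x̌ ∈ X_0∖C_0, Q(x̌,·) = (P(x,·) − δν(·))/(1−δ) if x̌ ∈ C_0, and Q(x̌,·) = ν(·) if x̌ ∈ X_1, and λ*(A_0) = (1−δ)λ(A∩C) + λ(A∩C^c), λ*(A_1) = δλ(A∩C). Then for any measure λ on B(X) and any Γ̌ ∈ B(X̌), ∫_{X̌} P̌(x̌, Γ̌) λ*(dx̌) = λ_1*(Γ̌), where λ_1(·) = ∫_X P(x,·) λ(dx). -/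

import Mathlib

open MeasureTheory ProbabilityTheory

variable {X : Type*} [MeasurableSpace X]

/-- The splitting `λ*` of a measure `λ` on `X`:
`λ*(A₀) = (1−δ)λ(A∩C) + λ(A∩Cᶜ)`, `λ*(A₁) = δλ(A∩C)`. -/
noncomputable def splitMeasure (C : Set X) (δ : ℝ) (μ0 : Measure X) :
    Measure (X × Bool) :=
  Measure.map (fun x => (x, false))
      (ENNReal.ofReal (1 - δ) • μ0.restrict C + μ0.restrict Cᶜ)
    + Measure.map (fun x => (x, true)) (ENNReal.ofReal δ • μ0.restrict C)

open Classical in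
/-- The kernel `Q` of the split-chain construction. -/
noncomputable def splitQ (P : Kernel X X) (ν : Measure X) (C : Set X) (δ : ℝ)
    (xs : X × Bool) : Measure X :=
  if xs.2 = true then ν
  else if xs.1 ∈ C then
    (ENNReal.ofReal (1 - δ))⁻¹ • ((P xs.1) - ENNReal.ofReal δ • ν)
  else P xs.1

/-- The split (Nummelin) transition kernel `P̌(xs,·) = Q(xs,·)*`. -/
noncomputable def splitKernel (P : Kernel X X) (ν : Measure X) (C : Set X)
    (δ : ℝ) (xs : X × Bool) : Measure (X × Bool) :=
  splitMeasure C δ (splitQ P ν C δ xs)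

lemma splitMeasure_apply' (C : Set X) (δ : ℝ) (m : Measure X) {G : Set (X × Bool)}
    (hG : MeasurableSet G) :
    splitMeasure C δ m G
      = ENNReal.ofReal (1 - δ) * m ((fun x => (x, false)) ⁻¹' G ∩ C)
        + m ((fun x => (x, false)) ⁻¹' G ∩ Cᶜ)
        + ENNReal.ofReal δ * m ((fun x => (x, true)) ⁻¹' G ∩ C) := by
  have h0 : Measurable fun x : X => (x, false) := measurable_id.prodMk measurable_const
  have h1 : Measurable fun x : X => (x, true) := measurable_id.prodMk measurable_const
  rw [splitMeasure, Measure.add_apply, Measure.map_apply h0 hG, Measure.map_apply h1 hG,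
    Measure.add_apply, Measure.smul_apply, Measure.smul_apply,
    Measure.restrict_apply (h0 hG), Measure.restrict_apply (h0 hG),
    Measure.restrict_apply (h1 hG), smul_eq_mul, smul_eq_mul]

open Classical in
lemma splitQ_apply (P : Kernel X X) [IsMarkovKernel P] (C : Set X)
    (ν : Measure X) [IsProbabilityMeasure ν]
    (δ : ℝ) (hδ0 : 0 < δ)
    (hminor : ∀ x, ∀ A : Set X, MeasurableSet A →
      ENNReal.ofReal (2 * δ) * C.indicator 1 x * ν A ≤ P x A)
    {S : Set X} (hS : MeasurableSet S) (xs : X × Bool) :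
    splitQ P ν C δ xs S
      = if xs.2 = true then ν S
        else if xs.1 ∈ C then
          (ENNReal.ofReal (1 - δ))⁻¹ * (P xs.1 S - ENNReal.ofReal δ * ν S)
        else P xs.1 S := by
  rcases xs with ⟨x, b⟩
  rw [splitQ]
  dsimp only
  split_ifs with hb hx
  · rfl
  · have hfin : IsFiniteMeasure (ENNReal.ofReal δ • ν) := by
      constructor
      simp only [Measure.smul_apply, smul_eq_mul]
      exact ENNReal.mul_lt_top ENNReal.ofReal_lt_top (measure_lt_top _ _)
    have hle : ENNReal.ofReal δ • ν ≤ P x := by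
      rw [Measure.le_iff]
      intro A hA
      refine le_trans ?_ (hminor x A hA)
      rw [Set.indicator_of_mem hx]
      simp only [Pi.one_apply, mul_one, Measure.smul_apply, smul_eq_mul]
      exact mul_le_mul_left (ENNReal.ofReal_le_ofReal (by linarith : δ ≤ 2 * δ)) _
    rw [Measure.smul_apply, smul_eq_mul, Measure.sub_apply hS hle,
      Measure.smul_apply, smul_eq_mul]
  · rfl

open Classical in
lemma measurable_splitQ_apply (P : Kernel X X) [IsMarkovKernel P]
    (C : Set X) (hC : MeasurableSet C)
    (ν : Measure X) [IsProbabilityMeasure ν]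
    (δ : ℝ) (hδ0 : 0 < δ)
    (hminor : ∀ x, ∀ A : Set X, MeasurableSet A →
      ENNReal.ofReal (2 * δ) * C.indicator 1 x * ν A ≤ P x A)
    {S : Set X} (hS : MeasurableSet S) :
    Measurable fun xs : X × Bool => splitQ P ν C δ xs S := by
  have hrw : (fun xs : X × Bool => splitQ P ν C δ xs S)
      = fun xs : X × Bool => if xs.2 = true then ν S
        else if xs.1 ∈ C then
          (ENNReal.ofReal (1 - δ))⁻¹ * (P xs.1 S - ENNReal.ofReal δ * ν S)
        else P xs.1 S :=
    funext (splitQ_apply P C ν δ hδ0 hminor hS)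
  rw [hrw]
  have hin : Measurable fun x : X =>
      if x ∈ C then (ENNReal.ofReal (1 - δ))⁻¹ * (P x S - ENNReal.ofReal δ * ν S)
      else P x S :=
    Measurable.ite hC (((P.measurable_coe hS).sub measurable_const).const_mul _)
      (P.measurable_coe hS)
  exact Measurable.ite (measurable_snd (measurableSet_singleton true))
    measurable_const (hin.comp measurable_fst)

open Classical in
lemma splitQ_lintegral (P : Kernel X X) [IsMarkovKernel P]
    (C : Set X) (hC : MeasurableSet C)
    (ν : Measure X) [IsProbabilityMeasure ν]
    (δ : ℝ) (hδ0 : 0 < δ) (hδ : δ < 1 / 2)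
    (hminor : ∀ x, ∀ A : Set X, MeasurableSet A →
      ENNReal.ofReal (2 * δ) * C.indicator 1 x * ν A ≤ P x A)
    (μ0 : Measure X) {S : Set X} (hS : MeasurableSet S) :
    ∫⁻ xs, splitQ P ν C δ xs S ∂ splitMeasure C δ μ0 = ∫⁻ x, P x S ∂ μ0 := by
  have h0 : Measurable fun x : X => (x, false) := measurable_id.prodMk measurable_const
  have h1 : Measurable fun x : X => (x, true) := measurable_id.prodMk measurable_const
  set a := ENNReal.ofReal (1 - δ) with ha
  have ha0 : a ≠ 0 := (ENNReal.ofReal_pos.mpr (by linarith)).ne'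
  have haT : a ≠ ⊤ := ENNReal.ofReal_ne_top
  have hg : Measurable fun xs : X × Bool => splitQ P ν C δ xs S :=
    measurable_splitQ_apply P C hC ν δ hδ0 hminor hS
  -- the pointwise value of the integrand over each piece
  have hcle : ∀ x ∈ C, ENNReal.ofReal δ * ν S ≤ P x S := by
    intro x hx
    refine le_trans ?_ (hminor x S hS)
    rw [Set.indicator_of_mem hx]
    simp only [Pi.one_apply, mul_one]
    exact mul_le_mul_left (ENNReal.ofReal_le_ofReal (by linarith : δ ≤ 2 * δ)) _
  rw [splitMeasure, lintegral_add_measure, lintegral_map hg h0, lintegral_map hg h1,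
    lintegral_add_measure, lintegral_smul_measure, lintegral_smul_measure]
  have e1 : ∫⁻ x in C, splitQ P ν C δ (x, false) S ∂μ0
      = a⁻¹ * ∫⁻ x in C, (P x S - ENNReal.ofReal δ * ν S) ∂μ0 := by
    rw [← lintegral_const_mul (f := fun x => P x S - ENNReal.ofReal δ * ν S) _
      ((P.measurable_coe hS).sub measurable_const)]
    refine setLIntegral_congr_fun hC (fun x hx => ?_)
    rw [splitQ_apply P C ν δ hδ0 hminor hS]
    simp [hx, ha]
  have e2 : ∫⁻ x in Cᶜ, splitQ P ν C δ (x, false) S ∂μ0 = ∫⁻ x in Cᶜ, P x S ∂μ0 := by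
    refine setLIntegral_congr_fun hC.compl (fun x hx => ?_)
    rw [splitQ_apply P C ν δ hδ0 hminor hS]
    simp only [Bool.false_eq_true, if_false]
    exact if_neg hx
  have e3 : ∫⁻ x in C, splitQ P ν C δ (x, true) S ∂μ0
      = ∫⁻ x in C, ν S ∂μ0 := by
    refine setLIntegral_congr_fun hC (fun x _ => ?_)
    rw [splitQ_apply P C ν δ hδ0 hminor hS]
    simp
  rw [e1, e2, e3, smul_eq_mul, smul_eq_mul, ← mul_assoc, ENNReal.mul_inv_cancel ha0 haT, one_mul, lintegral_const,
    Measure.restrict_apply_univ]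
  have e4 : ENNReal.ofReal δ * (ν S * μ0 C) = ∫⁻ x in C, ENNReal.ofReal δ * ν S ∂μ0 := by
    rw [lintegral_const, Measure.restrict_apply_univ, mul_assoc]
  rw [e4, add_assoc, add_comm (∫⁻ x in Cᶜ, P x S ∂μ0), ← add_assoc,
    ← lintegral_add_right _ measurable_const]
  have e5 : ∫⁻ x in C, ((P x S - ENNReal.ofReal δ * ν S) + ENNReal.ofReal δ * ν S) ∂μ0
      = ∫⁻ x in C, P x S ∂μ0 :=
    setLIntegral_congr_fun hC (fun x hx =>
      tsub_add_cancel_of_le (hcle x hx))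
  rw [e5, lintegral_add_compl _ hC]

/-- the splitting operation intertwines the original kernel and
the split kernel: `∫ P̌(xs,G) λ*(dxs) = (λ₁)*(G)` where `λ₁ = ∫ P(x,·)λ(dx)`. -/
theorem splitKernel_intertwines
    (P : Kernel X X) [IsMarkovKernel P]
    (C : Set X) (hC : MeasurableSet C)
    (ν : Measure X) [IsProbabilityMeasure ν] (hνC : ν C = 1)
    (δ : ℝ) (hδ0 : 0 < δ) (hδ : δ < 1 / 2)
    (hminor : ∀ x, ∀ A : Set X, MeasurableSet A →
      ENNReal.ofReal (2 * δ) * C.indicator 1 x * ν A ≤ P x A)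
    (μ0 : Measure X) (G : Set (X × Bool)) (hG : MeasurableSet G) :
    ∫⁻ xs, splitKernel P ν C δ xs G ∂ splitMeasure C δ μ0
      = splitMeasure C δ (μ0.bind fun x => P x) G := by
  have h0 : Measurable fun x : X => (x, false) := measurable_id.prodMk measurable_const
  have h1 : Measurable fun x : X => (x, true) := measurable_id.prodMk measurable_const
  set S₁ : Set X := (fun x => (x, false)) ⁻¹' G ∩ C with hS₁def
  set S₂ : Set X := (fun x => (x, false)) ⁻¹' G ∩ Cᶜ with hS₂def
  set S₃ : Set X := (fun x => (x, true)) ⁻¹' G ∩ C with hS₃def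
  have hS₁ : MeasurableSet S₁ := (h0 hG).inter hC
  have hS₂ : MeasurableSet S₂ := (h0 hG).inter hC.compl
  have hS₃ : MeasurableSet S₃ := (h1 hG).inter hC
  have hm1 := measurable_splitQ_apply P C hC ν δ hδ0 hminor hS₁
  have hm2 := measurable_splitQ_apply P C hC ν δ hδ0 hminor hS₂
  have hm3 := measurable_splitQ_apply P C hC ν δ hδ0 hminor hS₃
  have hrw : ∀ xs : X × Bool, splitKernel P ν C δ xs G
      = ENNReal.ofReal (1 - δ) * splitQ P ν C δ xs S₁ + splitQ P ν C δ xs S₂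
        + ENNReal.ofReal δ * splitQ P ν C δ xs S₃ := fun xs =>
    splitMeasure_apply' C δ _ hG
  calc ∫⁻ xs, splitKernel P ν C δ xs G ∂ splitMeasure C δ μ0
      = ∫⁻ xs, (ENNReal.ofReal (1 - δ) * splitQ P ν C δ xs S₁ + splitQ P ν C δ xs S₂
          + ENNReal.ofReal δ * splitQ P ν C δ xs S₃) ∂ splitMeasure C δ μ0 :=
        lintegral_congr hrw
    _ = ENNReal.ofReal (1 - δ) * (∫⁻ xs, splitQ P ν C δ xs S₁ ∂ splitMeasure C δ μ0)
          + (∫⁻ xs, splitQ P ν C δ xs S₂ ∂ splitMeasure C δ μ0)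
          + ENNReal.ofReal δ * (∫⁻ xs, splitQ P ν C δ xs S₃ ∂ splitMeasure C δ μ0) := by
        rw [lintegral_add_right _ (hm3.const_mul _), lintegral_add_right _ hm2,
          lintegral_const_mul _ hm1, lintegral_const_mul _ hm3]
    _ = ENNReal.ofReal (1 - δ) * (∫⁻ x, P x S₁ ∂ μ0) + (∫⁻ x, P x S₂ ∂ μ0)
          + ENNReal.ofReal δ * (∫⁻ x, P x S₃ ∂ μ0) := by
        rw [splitQ_lintegral P C hC ν δ hδ0 hδ hminor μ0 hS₁,
          splitQ_lintegral P C hC ν δ hδ0 hδ hminor μ0 hS₂,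
          splitQ_lintegral P C hC ν δ hδ0 hδ hminor μ0 hS₃]
    _ = splitMeasure C δ (μ0.bind fun x => P x) G := by
        rw [splitMeasure_apply' C δ _ hG,
          Measure.bind_apply hS₁ P.measurable.aemeasurable, Measure.bind_apply hS₂ P.measurable.aemeasurable,
          Measure.bind_apply hS₃ P.measurable.aemeasurable]
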